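/- The Mrugala metric G has signature (n+1, n): for every m ∈ P the invertible matrix S(m) whose columns are the vectors ξ = ∂_{x^0}, u_l = (P_l + X_l)/√2 and v_l = (P_l − X_l)/√2 (l = 1,…,n), where P_l = ∂_{p_l} and X_l = ∂_{x^l} − p_l ∂_{x^0}, satisfies S(m)ᵀ G(m) S(m) = diag(1, I_n, −I_n). -/
import Mathlib


/-!
Statement 1: The Mrugala metric `G` has signature `(n+1, n)`: for every `m` the
invertible matrix `S(m)` whose columns are `ξ = ∂_{x^0}`, `u_l = (P_l + X_l)/√2`,
`v_l = (P_l - X_l)/√2` satisfies `S(m)ᵀ G(m) S(m) = diag(1, Iₙ, -Iₙ)`.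
-/

abbrev Idx (n : ℕ) : Type := Unit ⊕ (Fin n ⊕ Fin n)
abbrev Pt (n : ℕ) : Type := Idx n → ℝ

/-- The Mrugala metric `G = [[1, 0, pᵀ], [0, 0ₙ, Iₙ], [p, Iₙ, p pᵀ]]`. -/
def Gmat (n : ℕ) (m : Pt n) : Matrix (Idx n) (Idx n) ℝ :=
  Matrix.of fun a b =>
    match a, b with
    | Sum.inl _, Sum.inl _ => 1
    | Sum.inl _, Sum.inr (Sum.inl _) => 0
    | Sum.inl _, Sum.inr (Sum.inr j) => m (Sum.inr (Sum.inl j))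
    | Sum.inr (Sum.inl _), Sum.inl _ => 0
    | Sum.inr (Sum.inl _), Sum.inr (Sum.inl _) => 0
    | Sum.inr (Sum.inl i), Sum.inr (Sum.inr j) => if i = j then 1 else 0
    | Sum.inr (Sum.inr i), Sum.inl _ => m (Sum.inr (Sum.inl i))
    | Sum.inr (Sum.inr i), Sum.inr (Sum.inl j) => if i = j then 1 else 0
    | Sum.inr (Sum.inr i), Sum.inr (Sum.inr j) =>
        m (Sum.inr (Sum.inl i)) * m (Sum.inr (Sum.inl j))

/-- The tangent vector `ξ = ∂_{x^0}`. -/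
noncomputable def xiVec (n : ℕ) : Pt n := Pi.single (Sum.inl ()) 1

/-- The tangent vector `P_l = ∂_{p_l}`. -/
noncomputable def Pvec (n : ℕ) (l : Fin n) : Pt n := Pi.single (Sum.inr (Sum.inl l)) 1

/-- The tangent vector `X_l = ∂_{x^l} - p_l ∂_{x^0}`. -/
noncomputable def Xvec (n : ℕ) (m : Pt n) (l : Fin n) : Pt n :=
  (Pi.single (Sum.inr (Sum.inr l)) 1 : Pt n) -
    m (Sum.inr (Sum.inl l)) • (Pi.single (Sum.inl ()) 1 : Pt n)

/-- The matrix with columns `ξ`, `u_l = (P_l + X_l)/√2`, `v_l = (P_l - X_l)/√2`. -/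
noncomputable def Smat (n : ℕ) (m : Pt n) : Matrix (Idx n) (Idx n) ℝ :=
  Matrix.of fun a b =>
    match b with
    | Sum.inl _ => xiVec n a
    | Sum.inr (Sum.inl l) => ((Real.sqrt 2)⁻¹ • (Pvec n l + Xvec n m l)) a
    | Sum.inr (Sum.inr l) => ((Real.sqrt 2)⁻¹ • (Pvec n l - Xvec n m l)) a

/-- The diagonal matrix `diag(1, Iₙ, -Iₙ)`. -/
def Dmat (n : ℕ) : Matrix (Idx n) (Idx n) ℝ :=
  Matrix.of fun a b =>
    match a, b with
    | Sum.inl _, Sum.inl _ => 1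
    | Sum.inr (Sum.inl i), Sum.inr (Sum.inl j) => if i = j then 1 else 0
    | Sum.inr (Sum.inr i), Sum.inr (Sum.inr j) => if i = j then (-1 : ℝ) else 0
    | _, _ => 0


lemma sqrt2_inv_mul : (Real.sqrt 2)⁻¹ * (Real.sqrt 2)⁻¹ = 2⁻¹ := by
  rw [← mul_inv]
  norm_num [Real.mul_self_sqrt]

/-- Intermediate matrix equal to `G * S`. -/
noncomputable def Tmat (n : ℕ) (m : Pt n) : Matrix (Idx n) (Idx n) ℝ :=
  Matrix.of fun a b =>
    match a, b with
    | Sum.inl _, Sum.inl _ => 1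
    | Sum.inl _, _ => 0
    | Sum.inr (Sum.inl _), Sum.inl _ => 0
    | Sum.inr (Sum.inl i), Sum.inr (Sum.inl l) =>
        if i = l then (Real.sqrt 2)⁻¹ else 0
    | Sum.inr (Sum.inl i), Sum.inr (Sum.inr l) =>
        if i = l then -(Real.sqrt 2)⁻¹ else 0
    | Sum.inr (Sum.inr i), Sum.inl _ => m (Sum.inr (Sum.inl i))
    | Sum.inr (Sum.inr i), Sum.inr (Sum.inl l) =>
        if i = l then (Real.sqrt 2)⁻¹ else 0
    | Sum.inr (Sum.inr i), Sum.inr (Sum.inr l) =>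
        if i = l then (Real.sqrt 2)⁻¹ else 0

lemma GS (n : ℕ) (m : Pt n) : Gmat n m * Smat n m = Tmat n m := by
  ext a b
  rcases a with _ | a | a <;> rcases b with _ | b | b <;>
    simp [Smat, Gmat, Tmat, xiVec, Pvec, Xvec, Matrix.mul_apply,
      Fintype.sum_sum_type, Pi.single_apply, mul_ite, ite_mul,
      Finset.sum_ite_eq, Finset.sum_ite_eq'] <;>
    (try split) <;> ring

lemma key (n : ℕ) (m : Pt n) :
    (Smat n m).transpose * Gmat n m * Smat n m = Dmat n := by
  rw [Matrix.mul_assoc, GS]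
  ext a b
  rcases a with _ | a | a <;> rcases b with _ | b | b <;>
    simp [Smat, Tmat, Dmat, xiVec, Pvec, Xvec, Matrix.mul_apply,
      Matrix.transpose_apply, Fintype.sum_sum_type, Pi.single_apply,
      mul_ite, ite_mul, Finset.sum_ite_eq, Finset.sum_ite_eq'] <;>
    (try split) <;> simp_all [sqrt2_inv_mul, eq_comm] <;>
    (try ring_nf) <;> (try simp [sqrt2_inv_mul])

theorem mrugala_signature (n : ℕ) (hn : 1 ≤ n) (m : Pt n) :
    IsUnit (Smat n m) ∧ (Smat n m).transpose * Gmat n m * Smat n m = Dmat n := by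
  have hk := key n m
  have hD : (Dmat n).det ≠ 0 := by
    have hDD : Dmat n * Dmat n = 1 := by
      ext a b
      rcases a with _ | a | a <;> rcases b with _ | b | b <;>
        simp [Dmat, Matrix.mul_apply, Fintype.sum_sum_type, Matrix.one_apply,
          mul_ite, ite_mul, Finset.sum_ite_eq, Finset.sum_ite_eq', Sum.inr.injEq,
          Sum.inl.injEq] <;> (try split) <;> simp_all
    intro h0
    have := congrArg Matrix.det hDD
    rw [Matrix.det_mul, h0, Matrix.det_one] at this
    simp at this
  have hS : (Smat n m).det ≠ 0 := by
    intro h0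
    apply hD
    rw [← hk]
    rw [Matrix.det_mul, Matrix.det_mul, h0]
    ring
  exact ⟨(Matrix.isUnit_iff_isUnit_det _).2 (isUnit_iff_ne_zero.2 hS), hk⟩
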